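/- Let n = p + q and let Ã, B̃, C̃, B̂ ∈ ℝ^{n×n} be partitioned into 2×2 blocks with diagonal blocks of sizes p and q, where C̃ = [[C11, 0],[C21, 0]] has zero second block column and B̂ = [[B11, B12],[B21, B22]]. Suppose B̂ and B22 are invertible and that R := C̃·B̂⁻¹ satisfies R²·Ã − R·B̃ + C̃ = 0. Define Ψ = −B12·B22⁻¹ and S = B11 + Ψ·B21, assume S is invertible, and set Y = (C11 + Ψ·C21)·S⁻¹ and U = [I_p, Ψ] ∈ ℝ^{p×n}. Then Y²·U·Ã − Y·U·B̃ + U·C̃ = 0; that is, (Y, [I, Ψ]) satisfies the left invariant pair equation for F̃(y) = Ã·y² − B̃·y + C̃. -/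

import Mathlib

open Matrix

/-- Deflating the spurious zero eigenvalues of `R = C̃·B̂⁻¹`: the pair
`(Y, [I, Ψ])` with `Ψ = −B12·B22⁻¹`, `S = B11 + Ψ·B21`, `Y = (C11 + Ψ·C21)·S⁻¹` satisfies
the left invariant pair equation for `F̃(y) = Ã y² − B̃ y + C̃`. -/
theorem deflated_invariant_pair {p q : ℕ}
    (Atil Btil : Matrix (Fin p ⊕ Fin q) (Fin p ⊕ Fin q) ℝ)
    (C11 : Matrix (Fin p) (Fin p) ℝ) (C21 : Matrix (Fin q) (Fin p) ℝ)
    (B11 : Matrix (Fin p) (Fin p) ℝ) (B12 : Matrix (Fin p) (Fin q) ℝ)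
    (B21 : Matrix (Fin q) (Fin p) ℝ) (B22 : Matrix (Fin q) (Fin q) ℝ)
    (Ctil Bhat : Matrix (Fin p ⊕ Fin q) (Fin p ⊕ Fin q) ℝ)
    (hCtil : Ctil = Matrix.fromBlocks C11 0 C21 0)
    (hBhat : Bhat = Matrix.fromBlocks B11 B12 B21 B22)
    (hBhatInv : IsUnit Bhat.det) (hB22Inv : IsUnit B22.det)
    (R : Matrix (Fin p ⊕ Fin q) (Fin p ⊕ Fin q) ℝ) (hR : R = Ctil * Bhat⁻¹)
    (hRsol : R ^ 2 * Atil - R * Btil + Ctil = 0)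
    (Ψ : Matrix (Fin p) (Fin q) ℝ) (hΨ : Ψ = -(B12 * B22⁻¹))
    (S : Matrix (Fin p) (Fin p) ℝ) (hS : S = B11 + Ψ * B21) (hSInv : IsUnit S.det)
    (Y : Matrix (Fin p) (Fin p) ℝ) (hY : Y = (C11 + Ψ * C21) * S⁻¹)
    (U : Matrix (Fin p) (Fin p ⊕ Fin q) ℝ) (hU : U = Matrix.fromCols 1 Ψ) :
    Y ^ 2 * U * Atil - Y * U * Btil + U * Ctil = 0 := by
  have hΨB22 : Ψ * B22 = -B12 := by
    rw [hΨ, Matrix.neg_mul, Matrix.mul_assoc, Matrix.nonsing_inv_mul B22 hB22Inv, Matrix.mul_one]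
  have hUC : U * Ctil = (C11 + Ψ * C21) * (Matrix.fromCols 1 0 : Matrix (Fin p) (Fin p ⊕ Fin q) ℝ) := by
    rw [hU, hCtil, Matrix.fromCols_mul_fromBlocks, Matrix.mul_fromCols]
    simp [Matrix.one_mul]
  have hUB : U * Bhat = S * (Matrix.fromCols 1 0 : Matrix (Fin p) (Fin p ⊕ Fin q) ℝ) := by
    rw [hU, hBhat, Matrix.fromCols_mul_fromBlocks, Matrix.mul_fromCols, hS]
    simp [hΨB22, Matrix.one_mul]
  have hcol : Matrix.fromCols (1 : Matrix (Fin p) (Fin p) ℝ) 0 = S⁻¹ * (U * Bhat) := by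
    rw [hUB, ← Matrix.mul_assoc, Matrix.nonsing_inv_mul S hSInv, Matrix.one_mul]
  have hUR : U * R = Y * U := by
    rw [hR, ← Matrix.mul_assoc, hUC, hcol, hY]
    rw [Matrix.mul_assoc (C11 + Ψ * C21), Matrix.mul_assoc, Matrix.mul_assoc,
      Matrix.mul_nonsing_inv Bhat hBhatInv, Matrix.mul_one, Matrix.mul_assoc]
  have := congrArg (fun M => U * M) hRsol
  simp only [Matrix.mul_add, Matrix.mul_sub, Matrix.mul_zero] at this
  have hUR2 : U * (R ^ 2 * Atil) = Y ^ 2 * U * Atil := by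
    rw [pow_two, pow_two, ← Matrix.mul_assoc, ← Matrix.mul_assoc, hUR,
      Matrix.mul_assoc Y, hUR, ← Matrix.mul_assoc]
  rw [hUR2, ← Matrix.mul_assoc, hUR] at this
  exact this
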